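/- If G is an r-regular graph on n vertices and q ≥ 1 an integer, then the number of proper q-colorings of the closed neighborhood hypergraph 𝓝_c(G) is at most (q^(r+1) - q)^(n/(r+1)). -/

import Mathlib

set_option maxHeartbeats 1000000

open Finset

section Shearer

variable {V : Type*} [Fintype V] [DecidableEq V]
variable {X : Type*} [Fintype X] [DecidableEq X]

/-- Restriction of a partial function to a finset. -/
def projFn (T : Finset V) (φ : V → Option X) : V → Option X :=
  fun x => if x ∈ T then φ x else none

lemma projFn_update_of_not_mem {T : Finset V} {x : V} (hx : x ∉ T) (φ : V → Option X) :
    projFn T (Function.update φ x none) = projFn T φ := by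
  funext y
  unfold projFn
  by_cases hy : y ∈ T
  · have hyx : y ≠ x := fun h => hx (h ▸ hy)
    simp [hy, Function.update_of_ne hyx]
  · simp [hy]

lemma projFn_update_of_mem {T : Finset V} {x : V} (hx : x ∈ T) (φ : V → Option X) :
    projFn T (Function.update φ x none) = Function.update (projFn T φ) x none := by
  funext y
  unfold projFn
  by_cases hyx : y = x
  · subst hyx; simp [hx]
  · by_cases hy : y ∈ T <;> simp [hy, Function.update_of_ne hyx]

/-- Hölder-type inequality derived from weighted AM–GM. -/
lemma holder_lite {ι C : Type*} [Fintype C] (S : Finset ι) (k : ℕ) (hkcard : S.card = k)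
    (hk : 1 ≤ k) (b : ι → C → ℝ) (hb : ∀ i c, 0 ≤ b i c) :
    ∑ c, ∏ i ∈ S, b i c ^ (1 / (k : ℝ)) ≤ ∏ i ∈ S, (∑ c, b i c) ^ (1 / (k : ℝ)) := by
  have hkR : (0:ℝ) < (k:ℝ) := by exact_mod_cast hk
  by_cases hz : ∃ i ∈ S, ∑ c, b i c = 0
  · obtain ⟨i₀, hi₀, hBi₀⟩ := hz
    have hb0 : ∀ c, b i₀ c = 0 := by
      intro c
      have := (Finset.sum_eq_zero_iff_of_nonneg (fun c _ => hb i₀ c)).mp hBi₀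
      exact this c (mem_univ c)
    have hL : ∑ c, ∏ i ∈ S, b i c ^ (1 / (k : ℝ)) = 0 := by
      apply Finset.sum_eq_zero
      intro c _
      apply Finset.prod_eq_zero hi₀
      rw [hb0 c]
      exact Real.zero_rpow (one_div_ne_zero (ne_of_gt hkR))
    rw [hL]
    exact Finset.prod_nonneg fun i _ => Real.rpow_nonneg
      (Finset.sum_nonneg fun c _ => hb i c) _
  · push_neg at hz
    have hBpos : ∀ i ∈ S, 0 < ∑ c, b i c := fun i hi =>
      lt_of_le_of_ne (Finset.sum_nonneg fun c _ => hb i c) (Ne.symm (hz i hi))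
    set B : ι → ℝ := fun i => ∑ c, b i c with hB
    have key : ∀ c, ∏ i ∈ S, b i c ^ (1 / (k : ℝ)) ≤
        (∑ i ∈ S, (1 / (k:ℝ)) * (b i c / B i)) * ∏ i ∈ S, B i ^ (1 / (k : ℝ)) := by
      intro c
      have h1 : ∏ i ∈ S, b i c ^ (1 / (k : ℝ)) =
          (∏ i ∈ S, (b i c / B i) ^ (1 / (k : ℝ))) * ∏ i ∈ S, B i ^ (1 / (k : ℝ)) := by
        rw [← Finset.prod_mul_distrib]
        apply Finset.prod_congr rfl
        intro i hi
        rw [← Real.mul_rpow (div_nonneg (hb i c) (le_of_lt (hBpos i hi)))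
          (le_of_lt (hBpos i hi))]
        rw [div_mul_cancel₀ _ (ne_of_gt (hBpos i hi))]
      rw [h1]
      apply mul_le_mul_of_nonneg_right _ (Finset.prod_nonneg fun i hi =>
        Real.rpow_nonneg (le_of_lt (hBpos i hi)) _)
      have := Real.geom_mean_le_arith_mean_weighted S (fun _ => 1 / (k:ℝ))
        (fun i => b i c / B i) (fun i _ => by positivity)
        (by rw [Finset.sum_const, hkcard, nsmul_eq_mul]; field_simp)
        (fun i hi => div_nonneg (hb i c) (le_of_lt (hBpos i hi)))
      exact this
    calc ∑ c, ∏ i ∈ S, b i c ^ (1 / (k : ℝ))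
        ≤ ∑ c, (∑ i ∈ S, (1 / (k:ℝ)) * (b i c / B i)) * ∏ i ∈ S, B i ^ (1 / (k : ℝ)) :=
          Finset.sum_le_sum fun c _ => key c
      _ = (∑ c, ∑ i ∈ S, (1 / (k:ℝ)) * (b i c / B i)) * ∏ i ∈ S, B i ^ (1 / (k : ℝ)) := by
          rw [Finset.sum_mul]
      _ = 1 * ∏ i ∈ S, B i ^ (1 / (k : ℝ)) := by
          congr 1
          rw [Finset.sum_comm]
          have : ∀ i ∈ S, ∑ c, (1 / (k:ℝ)) * (b i c / B i) = 1 / (k:ℝ) := by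
            intro i hi
            rw [← Finset.mul_sum, ← Finset.sum_div, hB,
              div_self (ne_of_gt (hBpos i hi)), mul_one]
          rw [Finset.sum_congr rfl this, Finset.sum_const, hkcard, nsmul_eq_mul]
          field_simp
      _ = ∏ i ∈ S, B i ^ (1 / (k : ℝ)) := one_mul _

/-- Shearer's inequality for a (≥ k)-fold cover. -/
lemma shearer {ι : Type*} [Fintype ι] (A : ι → Finset V) (k : ℕ) (hk : 1 ≤ k)
    (U : Finset V) :
    ∀ F : Finset (V → Option X),
      (∀ φ ∈ F, ∀ x, x ∉ U → φ x = none) →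
      (∀ x ∈ U, k ≤ (univ.filter fun i => x ∈ A i).card) →
      (F.card : ℝ) ^ k ≤ ∏ i, ((F.image (projFn (A i))).card : ℝ) := by
  induction U using Finset.induction_on with
  | empty =>
    intro F hsupp _
    have h1 : F.card ≤ 1 := Finset.card_le_one.mpr fun a ha b hb => funext fun x => by
      rw [hsupp a ha x (notMem_empty x), hsupp b hb x (notMem_empty x)]
    rcases Finset.eq_empty_or_nonempty F with rfl | hF
    · simp only [Finset.card_empty, Nat.cast_zero]
      rw [zero_pow (by omega)]
      exact Finset.prod_nonneg fun i _ => Nat.cast_nonneg _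
    · have : F.card = 1 := le_antisymm h1 hF.card_pos
      rw [this]
      simp only [Nat.cast_one, one_pow]
      rw [← Nat.cast_prod]
      exact_mod_cast Finset.one_le_prod' fun i _ => Finset.card_pos.mpr (hF.image _)
  | @insert x s hxs ih =>
    intro F hsupp hcov
    classical
    set Fc : Option X → Finset (V → Option X) := fun c => F.filter (fun φ => φ x = c) with hFcdef
    set Gc : Option X → Finset (V → Option X) :=
      fun c => (Fc c).image (fun φ => Function.update φ x none) with hGcdef
    have upd_injOn : ∀ (s' : Finset (V → Option X)) (c : Option X), (∀ ψ ∈ s', ψ x = c) →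
        Set.InjOn (fun φ : V → Option X => Function.update φ x none)
          (s' : Set (V → Option X)) := by
      intro s' c hc φ hφ ψ hψ h
      funext y
      by_cases hy : y = x
      · subst hy; rw [hc φ hφ, hc ψ hψ]
      · have := congrFun h y
        simpa [Function.update_of_ne hy] using this
    have hGcard : ∀ c, (Gc c).card = (Fc c).card := by
      intro c
      exact Finset.card_image_of_injOn
        (upd_injOn (Fc c) c (fun ψ hψ => (Finset.mem_filter.mp hψ).2))
    have hsum : F.card = ∑ c, (Fc c).card :=
      Finset.card_eq_sum_card_fiberwise (f := fun φ : V → Option X => φ x) (fun φ _ => Finset.mem_univ (φ x))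
    have hGsupp : ∀ c, ∀ φ ∈ Gc c, ∀ y, y ∉ s → φ y = none := by
      intro c φ hφ y hy
      obtain ⟨ψ, hψ, rfl⟩ := Finset.mem_image.mp hφ
      by_cases hyx : y = x
      · subst hyx; simp
      · rw [Function.update_of_ne hyx]
        exact hsupp ψ (Finset.mem_filter.mp hψ).1 y (by simp [hyx, hy])
    have hIH : ∀ c, ((Fc c).card : ℝ) ^ k ≤ ∏ i, (((Gc c).image (projFn (A i))).card : ℝ) := by
      intro c
      rw [← hGcard c]
      exact ih (Gc c) (hGsupp c) (fun y hy => hcov y (mem_insert_of_mem hy))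
    -- relating projections
    have hle : ∀ c i, x ∉ A i →
        ((Gc c).image (projFn (A i))).card ≤ (F.image (projFn (A i))).card := by
      intro c i hxi
      apply Finset.card_le_card
      intro ψ hψ
      obtain ⟨φ', hφ', rfl⟩ := Finset.mem_image.mp hψ
      obtain ⟨φ, hφ, rfl⟩ := Finset.mem_image.mp hφ'
      exact Finset.mem_image.mpr ⟨φ, (Finset.mem_filter.mp hφ).1,
        (projFn_update_of_not_mem hxi φ).symm⟩
    have heq : ∀ i, x ∈ A i →
        ∑ c, ((Gc c).image (projFn (A i))).card = (F.image (projFn (A i))).card := by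
      intro i hxi
      have fib : (F.image (projFn (A i))).card =
          ∑ c, ((F.image (projFn (A i))).filter (fun ψ => ψ x = c)).card :=
        Finset.card_eq_sum_card_fiberwise (f := fun ψ : V → Option X => ψ x) (fun ψ _ => Finset.mem_univ (ψ x))
      rw [fib]
      apply Finset.sum_congr rfl
      intro c _
      have hB : (F.image (projFn (A i))).filter (fun ψ => ψ x = c) =
          (Fc c).image (projFn (A i)) := by
        ext ψ
        simp only [Finset.mem_filter, Finset.mem_image, hFcdef]
        constructor
        · rintro ⟨⟨φ, hφ, rfl⟩, hc⟩
          exact ⟨φ, ⟨hφ, by simpa [projFn, hxi] using hc⟩, rfl⟩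
        · rintro ⟨φ, ⟨hφF, hφx⟩, rfl⟩
          exact ⟨⟨φ, hφF, rfl⟩, by simpa [projFn, hxi] using hφx⟩
      have hC : (Gc c).image (projFn (A i)) =
          ((Fc c).image (projFn (A i))).image (fun ψ => Function.update ψ x none) := by
        rw [hGcdef]
        rw [Finset.image_image, Finset.image_image]
        apply Finset.image_congr
        intro φ _
        exact projFn_update_of_mem hxi φ
      have hCcard : (((Fc c).image (projFn (A i))).image
          (fun ψ => Function.update ψ x none)).card
          = ((Fc c).image (projFn (A i))).card := by
        apply Finset.card_image_of_injOn
        apply upd_injOn _ c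
        intro ψ hψ
        obtain ⟨φ, hφ, rfl⟩ := Finset.mem_image.mp hψ
        have : φ x = c := (Finset.mem_filter.mp hφ).2
        simpa [projFn, hxi] using this
      rw [hC, hCcard, hB]
    -- analytic part
    set b : ι → Option X → ℝ := fun i c => (((Gc c).image (projFn (A i))).card : ℝ) with hbdef
    set B : ι → ℝ := fun i => ((F.image (projFn (A i))).card : ℝ) with hBdef
    have hbnn : ∀ i c, 0 ≤ b i c := fun i c => Nat.cast_nonneg _
    have hBnn : ∀ i, 0 ≤ B i := fun i => Nat.cast_nonneg _
    set Sx : Finset ι := univ.filter (fun i => x ∈ A i) with hSxdef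
    have hSx : k ≤ Sx.card := hcov x (mem_insert_self x s)
    obtain ⟨S₀, hS₀sub, hS₀card⟩ := Finset.exists_subset_card_eq hSx
    have hk0 : (k:ℝ) ≠ 0 := by positivity
    have hbB : ∀ i c, b i c ≤ B i := by
      intro i c
      by_cases hxi : x ∈ A i
      · have : ∑ c', b i c' = B i := by
          simp only [hbdef, hBdef]
          exact_mod_cast heq i hxi
        rw [← this]
        exact Finset.single_le_sum (fun c' _ => hbnn i c') (mem_univ c)
      · simp only [hbdef, hBdef]
        exact_mod_cast hle c i hxi
    have hBsum : ∀ i ∈ S₀, ∑ c, b i c = B i := by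
      intro i hi
      have hxi : x ∈ A i := (Finset.mem_filter.mp (hS₀sub hi)).2
      simp only [hbdef, hBdef]
      exact_mod_cast heq i hxi
    -- per-color bound
    have hac : ∀ c : Option X, ((Fc c).card : ℝ) ≤
        (∏ i ∈ S₀, b i c ^ (1/(k:ℝ))) * ∏ i ∈ univ \ S₀, B i ^ (1/(k:ℝ)) := by
      intro c
      have h1 : ((Fc c).card : ℝ) ≤ (∏ i, b i c) ^ (1/(k:ℝ)) := by
        have := hIH c
        have h2 : (((Fc c).card : ℝ) ^ k) ^ (1/(k:ℝ)) ≤ (∏ i, b i c) ^ (1/(k:ℝ)) :=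
          Real.rpow_le_rpow (pow_nonneg (Nat.cast_nonneg _) k) this
            (le_of_lt (one_div_pos.mpr (by exact_mod_cast hk)))
        rw [one_div] at h2 ⊢
        rwa [Real.pow_rpow_inv_natCast (Nat.cast_nonneg _) (by omega)] at h2
      have h3 : (∏ i, b i c) ^ (1/(k:ℝ)) = ∏ i, b i c ^ (1/(k:ℝ)) :=
        (Real.finset_prod_rpow univ _ (fun i _ => hbnn i c) _).symm
      have h4 : ∏ i, b i c ^ (1/(k:ℝ)) =
          (∏ i ∈ S₀, b i c ^ (1/(k:ℝ))) * ∏ i ∈ univ \ S₀, b i c ^ (1/(k:ℝ)) := by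
        rw [mul_comm, Finset.prod_sdiff (Finset.subset_univ S₀)]
      have h5 : ∏ i ∈ univ \ S₀, b i c ^ (1/(k:ℝ)) ≤ ∏ i ∈ univ \ S₀, B i ^ (1/(k:ℝ)) := by
        apply Finset.prod_le_prod (fun i _ => Real.rpow_nonneg (hbnn i c) _)
        intro i _
        exact Real.rpow_le_rpow (hbnn i c) (hbB i c) (by positivity)
      calc ((Fc c).card : ℝ) ≤ (∏ i, b i c) ^ (1/(k:ℝ)) := h1
        _ = (∏ i ∈ S₀, b i c ^ (1/(k:ℝ))) * ∏ i ∈ univ \ S₀, b i c ^ (1/(k:ℝ)) := by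
            rw [h3, h4]
        _ ≤ (∏ i ∈ S₀, b i c ^ (1/(k:ℝ))) * ∏ i ∈ univ \ S₀, B i ^ (1/(k:ℝ)) := by
            apply mul_le_mul_of_nonneg_left h5
            exact Finset.prod_nonneg fun i _ => Real.rpow_nonneg (hbnn i c) _
    -- sum
    have hmain : (F.card : ℝ) ≤ ∏ i, B i ^ (1/(k:ℝ)) := by
      have hsum' : (F.card : ℝ) = ∑ c, ((Fc c).card : ℝ) := by
        rw [hsum]; push_cast; ring
      rw [hsum']
      calc ∑ c, ((Fc c).card : ℝ)
          ≤ ∑ c, (∏ i ∈ S₀, b i c ^ (1/(k:ℝ))) * ∏ i ∈ univ \ S₀, B i ^ (1/(k:ℝ)) :=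
            Finset.sum_le_sum fun c _ => hac c
        _ = (∑ c, ∏ i ∈ S₀, b i c ^ (1/(k:ℝ))) * ∏ i ∈ univ \ S₀, B i ^ (1/(k:ℝ)) := by
            rw [Finset.sum_mul]
        _ ≤ (∏ i ∈ S₀, (∑ c, b i c) ^ (1/(k:ℝ))) * ∏ i ∈ univ \ S₀, B i ^ (1/(k:ℝ)) := by
            apply mul_le_mul_of_nonneg_right
              (holder_lite S₀ k hS₀card hk b hbnn)
              (Finset.prod_nonneg fun i _ => Real.rpow_nonneg (hBnn i) _)
        _ = (∏ i ∈ S₀, B i ^ (1/(k:ℝ))) * ∏ i ∈ univ \ S₀, B i ^ (1/(k:ℝ)) := by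
            congr 1
            exact Finset.prod_congr rfl fun i hi => by rw [hBsum i hi]
        _ = ∏ i, B i ^ (1/(k:ℝ)) := by
            rw [mul_comm, Finset.prod_sdiff (Finset.subset_univ S₀)]
    have hfin : ((F.card : ℝ)) ^ k ≤ (∏ i, B i ^ (1/(k:ℝ))) ^ k :=
      pow_le_pow_left₀ (Nat.cast_nonneg _) hmain k
    calc ((F.card : ℝ)) ^ k ≤ (∏ i, B i ^ (1/(k:ℝ))) ^ k := hfin
      _ = ∏ i, (B i ^ (1/(k:ℝ))) ^ k := by rw [Finset.prod_pow]
      _ = ∏ i, B i := by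
          apply Finset.prod_congr rfl
          intro i _
          rw [one_div, Real.rpow_inv_natCast_pow (hBnn i) (by omega)]

end Shearer

/-- For an `r`-regular graph `G` on `n` vertices and `q ≥ 1`, the number of proper
`q`-colorings of the closed neighborhood hypergraph of `G` is at most
`(q^(r+1) - q)^(n/(r+1))`. -/
theorem stmt9 {V : Type*} [Fintype V] [DecidableEq V] (G : SimpleGraph V) [DecidableRel G.Adj]
    (r : ℕ) (hreg : G.IsRegularOfDegree r) (q : ℕ) (hq : 1 ≤ q) :
    ({φ : V → Fin q | ∀ v : V, ∃ u ∈ insert v (G.neighborFinset v),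
        ∃ w ∈ insert v (G.neighborFinset v), φ u ≠ φ w}.ncard : ℝ) ≤
      ((q : ℝ) ^ (r + 1) - q) ^ ((Fintype.card V : ℝ) / (r + 1)) := by
  classical
  set Nc : V → Finset V := fun v => insert v (G.neighborFinset v) with hNc
  set F0 : Finset (V → Fin q) :=
    univ.filter (fun φ => ∀ v : V, ∃ u ∈ Nc v, ∃ w ∈ Nc v, φ u ≠ φ w) with hF0
  have hncard : {φ : V → Fin q | ∀ v : V, ∃ u ∈ insert v (G.neighborFinset v),
      ∃ w ∈ insert v (G.neighborFinset v), φ u ≠ φ w}.ncard = F0.card := by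
    rw [← Set.ncard_coe_finset]
    congr 1
    ext φ
    simp [hF0, hNc]
  set lift : (V → Fin q) → (V → Option (Fin q)) := fun φ x => some (φ x) with hlift
  set F : Finset (V → Option (Fin q)) := F0.image lift with hF
  have hFcard : F.card = F0.card :=
    Finset.card_image_of_injective _ (fun φ ψ h => funext fun x =>
      Option.some_injective _ (congrFun h x))
  have hNcCard : ∀ v, (Nc v).card = r + 1 := by
    intro v
    rw [hNc]
    rw [Finset.card_insert_of_notMem (by simp)]
    rw [SimpleGraph.card_neighborFinset_eq_degree, hreg v]
  have hcov : ∀ x : V, x ∈ (univ : Finset V) →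
      (r+1) ≤ (univ.filter fun v => x ∈ Nc v).card := by
    intro x _
    have hfe : (univ.filter fun v => x ∈ Nc v) = Nc x := by
      ext v
      simp only [Finset.mem_filter, Finset.mem_univ, true_and, hNc, Finset.mem_insert,
        SimpleGraph.mem_neighborFinset]
      rw [G.adj_comm]
      constructor
      · rintro (h | h)
        · exact Or.inl h.symm
        · exact Or.inr h
      · rintro (h | h)
        · exact Or.inl h.symm
        · exact Or.inr h
    rw [hfe, hNcCard x]
  have hShear := shearer (X := Fin q) Nc (r+1) (Nat.succ_le_succ (Nat.zero_le r)) univ F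
    (fun φ hφ x hx => absurd (mem_univ x) hx) hcov
  have hqle : q ≤ q ^ (r+1) := le_self_pow₀ hq (Nat.succ_ne_zero r)
  have hloc : ∀ v : V, (F.image (projFn (Nc v))).card ≤ q ^ (r+1) - q := by
    intro v
    set T := Nc v with hT
    have hvT : v ∈ T := Finset.mem_insert_self _ _
    set e : (V → Option (Fin q)) → (↥T → Fin q) :=
      fun ψ y => (ψ y.1).getD ⟨0, hq⟩ with he
    have hmem : ∀ ψ ∈ F.image (projFn T), ∃ φ ∈ F0, ψ = projFn T (lift φ) := by
      intro ψ hψ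
      obtain ⟨ψ', hψ', rfl⟩ := Finset.mem_image.mp hψ
      obtain ⟨φ, hφ, rfl⟩ := Finset.mem_image.mp hψ'
      exact ⟨φ, hφ, rfl⟩
    have hinj : Set.InjOn e (F.image (projFn T) : Set _) := by
      intro ψ1 h1 ψ2 h2 hee
      obtain ⟨φ1, hφ1, rfl⟩ := hmem ψ1 h1
      obtain ⟨φ2, hφ2, rfl⟩ := hmem ψ2 h2
      funext y
      by_cases hy : y ∈ T
      · have h := congrFun hee ⟨y, hy⟩
        simp only [he, projFn, hlift, if_pos hy, Option.getD_some] at h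
        simp [projFn, hlift, if_pos hy, h]
      · simp [projFn, hy]
    have hcard1 : (F.image (projFn T)).card = ((F.image (projFn T)).image e).card :=
      (Finset.card_image_of_injOn hinj).symm
    set Cst : Finset (↥T → Fin q) := univ.filter (fun g => ∀ y z, g y = g z) with hCst
    have hsub : (F.image (projFn T)).image e ⊆ univ \ Cst := by
      intro g hg
      obtain ⟨ψ, hψ, rfl⟩ := Finset.mem_image.mp hg
      obtain ⟨φ, hφ, rfl⟩ := hmem ψ hψ
      have hP := (Finset.mem_filter.mp hφ).2 v
      obtain ⟨u, hu, w, hw, huw⟩ := hP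
      rw [Finset.mem_sdiff]
      refine ⟨mem_univ _, ?_⟩
      rw [hCst, Finset.mem_filter]
      push_neg
      intro _
      refine ⟨⟨u, hu⟩, ⟨w, hw⟩, ?_⟩
      simpa [he, projFn, hlift, hT, hu, hw] using huw
    have hCstcard : Cst.card = q := by
      have himg : Cst = Finset.image (fun a : Fin q => (fun _ : ↥T => a)) univ := by
        ext g
        simp only [hCst, Finset.mem_filter, Finset.mem_univ, true_and, Finset.mem_image]
        constructor
        · intro h
          exact ⟨g ⟨v, hvT⟩, funext fun y => h ⟨v, hvT⟩ y⟩
        · rintro ⟨a, -, rfl⟩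
          intro y z; rfl
      rw [himg, Finset.card_image_of_injective _
        (fun a b h => congrFun h ⟨v, hvT⟩)]
      simp
    have huniv : (univ : Finset (↥T → Fin q)).card = q ^ (r+1) := by
      rw [Finset.card_univ, Fintype.card_fun, Fintype.card_coe, hNcCard v, Fintype.card_fin]
    calc (F.image (projFn T)).card = ((F.image (projFn T)).image e).card := hcard1
      _ ≤ (univ \ Cst).card := Finset.card_le_card hsub
      _ = q ^ (r+1) - q := by
          rw [Finset.card_sdiff_of_subset (Finset.subset_univ _), huniv, hCstcard]
  set M : ℝ := (q:ℝ) ^ (r+1) - q with hM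
  have hMnn : (0:ℝ) ≤ M := by
    rw [hM]
    have h : ((q:ℝ)) ≤ (q:ℝ)^(r+1) := by exact_mod_cast hqle
    linarith
  have hMcast : ((q ^ (r+1) - q : ℕ) : ℝ) = M := by
    rw [hM, Nat.cast_sub hqle]; push_cast; ring
  have hkey : ((F0.card :ℝ)) ^ (r+1) ≤ M ^ (Fintype.card V) := by
    calc ((F0.card:ℝ))^(r+1) = ((F.card:ℝ))^(r+1) := by rw [hFcard]
      _ ≤ ∏ v : V, ((F.image (projFn (Nc v))).card : ℝ) := hShear
      _ ≤ ∏ _v : V, M := by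
          apply Finset.prod_le_prod (fun v _ => Nat.cast_nonneg _)
          intro v _
          rw [← hMcast]
          exact_mod_cast hloc v
      _ = M ^ (Fintype.card V) := by rw [Finset.prod_const, Finset.card_univ]
  rw [hncard]
  have h1 : (F0.card : ℝ) = (((F0.card : ℝ)) ^ (r+1)) ^ (((r:ℝ)+1))⁻¹ := by
    rw [show ((r:ℝ)+1) = ((r+1 : ℕ):ℝ) by push_cast; ring]
    rw [Real.pow_rpow_inv_natCast (Nat.cast_nonneg _) (Nat.succ_ne_zero r)]
  rw [h1]
  have h2 : ((((F0.card : ℝ)) ^ (r+1)) : ℝ) ^ (((r:ℝ)+1))⁻¹ ≤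
      (M ^ (Fintype.card V)) ^ (((r:ℝ)+1))⁻¹ :=
    Real.rpow_le_rpow (pow_nonneg (Nat.cast_nonneg _) _) hkey (by positivity)
  refine h2.trans ?_
  rw [← Real.rpow_natCast M (Fintype.card V), ← Real.rpow_mul hMnn, div_eq_mul_inv]
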